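/- arXiv:1105.1048 — 2 statements merged into one kernel-verified Lean document; each statement's English description precedes it below -/
import Mathlib

section
/- Let G = H₁ ∗_K H₂ be an amalgamated free product, and let (β₁, …, β_l) be a reduced syllabic expression with l ≥ 1. Then β₁β₂⋯β_l ≠ 1 in G. -/
open Monoid

/-- The element of the amalgamated free product represented by a syllabic expression. -/
def syllProd {K : Type} [Group K] {H : Bool → Type} [∀ b, Group (H b)]
    (φ : ∀ b, K →* H b) (w : List ((b : Bool) × H b)) : PushoutI φ :=
  (w.map fun β => PushoutI.of (φ := φ) β.1 β.2).prod

/-- A nonempty syllabic expression is reduced if it is a single nontrivial syllable, or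
consecutive syllables lie in different factors and no syllable lies in (the image of) `K`. -/
def IsReducedSyll {K : Type} [Group K] {H : Bool → Type} [∀ b, Group (H b)]
    (φ : ∀ b, K →* H b) (w : List ((b : Bool) × H b)) : Prop :=
  (∃ β : (b : Bool) × H b, w = [β] ∧ β.2 ≠ 1) ∨
    (2 ≤ w.length ∧ w.Chain' (fun β β' => β.1 ≠ β'.1) ∧
      ∀ β ∈ w, β.2 ∉ Set.range (φ β.1))

/-- normal form theorem for amalgamated free products. A reduced
syllabic expression of length at least one does not represent the identity of
`G = H₁ ∗_K H₂`. -/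
theorem reduced_syllabic_word_ne_one
    {K : Type} [Group K] {H : Bool → Type} [∀ b, Group (H b)]
    (φ : ∀ b, K →* H b)
    (hinj : ∀ b, Function.Injective (φ b))
    (w : List ((b : Bool) × H b))
    (hlen : 1 ≤ w.length)
    (hw : IsReducedSyll φ w) :
    syllProd φ w ≠ 1 := by

  rcases hw with ⟨β, rfl, hβ⟩ | ⟨h2, hchain, hK⟩
  · intro h
    simp only [syllProd, List.map_cons, List.map_nil, List.prod_cons, List.prod_nil,
      mul_one] at h
    exact hβ (Monoid.PushoutI.of_injective hinj β.1 (by rw [h, map_one]))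
  · intro h
    have hne1 : ∀ β ∈ w, β.2 ≠ 1 := by
      intro β hβ hβ1
      exact hK β hβ ⟨1, by rw [map_one, hβ1]⟩
    let W : Monoid.CoprodI.Word H := ⟨w, hne1, hchain⟩
    have hred : Monoid.PushoutI.Reduced φ W := fun g hg => hK g hg
    have hprod : Monoid.PushoutI.ofCoprodI (φ := φ) W.prod = syllProd φ w := by
      simp only [Monoid.CoprodI.Word.prod, syllProd, map_list_prod, List.map_map]
      congr 1
    have := hred.eq_empty_of_mem_range hinj (by rw [hprod, h]; exact one_mem _)
    have : w = [] := congrArg Monoid.CoprodI.Word.toList this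
    simp [this] at h2
end

section
/- Let Γ be a Coxeter graph with m_{s,t} = ∞ for some s ≠ t, and suppose Γ_{X'} is a connected component of Γ_{X₂} where X₂ = X ∖ X₁ as in the decomposition of Γ_X (X = S∖{s}, X₁ the component of Γ_X containing t). If X' ∩ Y₁ = ∅ (Y₁ the component of Γ_{S∖{t}} containing s), then Γ_{X'} is a connected component of Γ, contradicting connectedness of Γ when |S| ≥ 2. Hence every connected component of Γ_{X₂} is contained in Y₁. -/
/-- The Coxeter graph of a Coxeter matrix: two distinct vertices `u, v` are adjacent
iff `m_{u,v} ≥ 3` (including `m_{u,v} = ∞`, encoded by `0`), i.e. iff `M u v ≠ 2`. -/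
def coxGraph {S : Type} (M : CoxeterMatrix S) : SimpleGraph S where
  Adj u v := u ≠ v ∧ M u v ≠ 2
  symm := by
    constructor
    rintro u v ⟨h1, h2⟩
    exact ⟨h1.symm, by rwa [M.symmetric v u]⟩
  loopless := ⟨fun u hu => hu.1 rfl⟩

/-- `u` and `v` are connected by a path of the graph `G` staying inside the subset `X`. -/
def ReachIn {S : Type} (G : SimpleGraph S) (X : Set S) (u v : S) : Prop :=
  ∃ (hu : u ∈ X) (hv : v ∈ X), (G.induce X).Reachable ⟨u, hu⟩ ⟨v, hv⟩


namespace ReachIn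

variable {S : Type} {G : SimpleGraph S} {X Y : Set S} {u v w : S}

lemma refl (hu : u ∈ X) : ReachIn G X u u := ⟨hu, hu, SimpleGraph.Reachable.refl _⟩

lemma symm : ReachIn G X u v → ReachIn G X v u := fun ⟨hu, hv, h⟩ => ⟨hv, hu, h.symm⟩

lemma trans : ReachIn G X u v → ReachIn G X v w → ReachIn G X u w :=
  fun ⟨hu, hv, h⟩ ⟨_, hw, h'⟩ => ⟨hu, hw, h.trans h'⟩

lemma mem_right : ReachIn G X u v → v ∈ X := fun ⟨_, hv, _⟩ => hv

lemma mono (hXY : X ⊆ Y) : ReachIn G X u v → ReachIn G Y u v := by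
  rintro ⟨hu, hv, h⟩
  refine ⟨hXY hu, hXY hv, ?_⟩
  let f : G.induce X →g G.induce Y := ⟨fun a => ⟨a.1, hXY a.2⟩, fun {a b} hadj => hadj⟩
  exact h.map f

lemma step (h : ReachIn G X u v) (hvw : G.Adj v w) (hw : w ∈ X) : ReachIn G X u w := by
  obtain ⟨hu, hv, hr⟩ := h
  exact ⟨hu, hw, hr.trans (SimpleGraph.Adj.reachable (show G.Adj v w from hvw))⟩

lemma single (hu : u ∈ X) (hvw : G.Adj u v) (hv : v ∈ X) : ReachIn G X u v :=
  (refl hu).step hvw hv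

end ReachIn

/-- Let `Γ` be a connected Coxeter graph on `S` (with `|S| ≥ 2`,
which follows from `s ≠ t`), with `m_{s,t} = ∞`.  With `X = S ∖ {s}`, `X₁` the
component of `Γ_X` containing `t`, `X₂ = X ∖ X₁`, and `Y₁` the component of
`Γ_{S ∖ {t}}` containing `s`: for the connected component `C` of `Γ_{X₂}` containing a
given vertex `u ∈ X₂`, if `C ∩ Y₁ = ∅` then `C` is (the vertex set of) a connected
component of `Γ`, which is impossible since `Γ` is connected; hence every connected
component of `Γ_{X₂}` is contained in `Y₁`. -/
theorem component_of_X2_subset_Y1 {S : Type} [Fintype S] (M : CoxeterMatrix S)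
    (hconn : (coxGraph M).Connected)
    (s t : S) (hst : s ≠ t) (hinf : M s t = 0)
    (X₂ : Set S)
    (hX₂ : X₂ = ({s}ᶜ : Set S) \ {u | ReachIn (coxGraph M) {s}ᶜ t u})
    (Y₁ : Set S)
    (hY₁ : Y₁ = {u | ReachIn (coxGraph M) {t}ᶜ s u})
    (u : S) (hu : u ∈ X₂)
    (C : Set S) (hC : C = {v | ReachIn (coxGraph M) X₂ u v}) :
    (Disjoint C Y₁ → ∀ v ∈ C, ∀ w : S, (coxGraph M).Adj v w → w ∈ C)
      ∧ ¬ Disjoint C Y₁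
      ∧ C ⊆ Y₁ := by
  subst hX₂ hY₁ hC
  set G := coxGraph M with hG
  set X₁ : Set S := {u | ReachIn G {s}ᶜ t u} with hX₁
  set X₂ : Set S := ({s}ᶜ : Set S) \ X₁ with hX₂
  set Y₁ : Set S := {u | ReachIn G {t}ᶜ s u} with hY₁
  set C : Set S := {v | ReachIn G X₂ u v} with hC
  have htX₁ : t ∈ X₁ := ReachIn.refl (by simp [Ne.symm hst])
  have hX₂t : X₂ ⊆ ({t}ᶜ : Set S) := by
    intro a ha
    simp only [Set.mem_compl_iff, Set.mem_singleton_iff]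
    rintro rfl
    exact ha.2 htX₁
  have hclosure : Disjoint C Y₁ → ∀ v ∈ C, ∀ w : S, G.Adj v w → w ∈ C := by
    intro hdisj v hv w hadj
    have hvX₂ : v ∈ X₂ := hv.mem_right
    by_cases hws : w = s
    · exfalso
      subst hws
      have hvY₁ : v ∈ Y₁ :=
        ReachIn.single (by simp [hst]) hadj.symm (hX₂t hvX₂)
      exact Set.disjoint_left.mp hdisj hv hvY₁
    · by_cases hwX₁ : w ∈ X₁
      · exfalso
        have : v ∈ X₁ := ReachIn.step hwX₁ hadj.symm hvX₂.1
        exact hvX₂.2 this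
      · exact ReachIn.step hv hadj ⟨by simpa using hws, hwX₁⟩
  have huC : u ∈ C := ReachIn.refl hu
  have hnd : ¬ Disjoint C Y₁ := by
    intro hdisj
    have hwalk : ∀ {a b : S} (_ : G.Walk a b), a ∈ C → b ∈ C := by
      intro a b p
      induction p with
      | nil => exact id
      | cons h _ ih => exact fun ha => ih (hclosure hdisj _ ha _ h)
    obtain ⟨p⟩ := hconn u s
    have hsC : s ∈ C := hwalk p huC
    exact hsC.mem_right.1 rfl
  refine ⟨hclosure, hnd, ?_⟩
  rw [Set.not_disjoint_iff] at hnd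
  obtain ⟨w, hwC, hwY⟩ := hnd
  intro v hvC
  exact hwY.trans ((hwC.symm.trans hvC).mono hX₂t)
end
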